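/- Let I_1,…,I_k be a partition of [n], J_1,…,J_k a partition of [m], and for each ℓ ∈ [k] a subset Z_ℓ ⊆ I_ℓ × J_ℓ. Fix real constants κ_{ij} for (i,j) ∈ ∪_ℓ Z_ℓ, nonzero constants A_j, C_i, constants B_j, D_i, K_ℓ, L_ℓ, and an arbitrary function h : ℝ^k → ℝ. Define g_i(y) = C_i·∏_{j:(i,j)∈Z_ℓ} (y_j + κ_{ij}) − D_i for i ∈ I_ℓ, f_j(x) = A_j·∏_{i:(i,j)∈Z_ℓ} (x_i + κ_{ij}) − B_j for j ∈ J_ℓ, f_0^{(ℓ)}(x) = K_ℓ·∏_{i∈I_ℓ} ((x_i + D_i)/C_i) − L_ℓ, g_0^{(ℓ)}(y) = K_ℓ·∏_{j∈J_ℓ} ((y_j + B_j)/A_j) − L_ℓ, f_0 = h∘(f_0^{(1)},…,f_0^{(k)}), g_0 = h∘(g_0^{(1)},…,g_0^{(k)}). Then f_0(g_1(z_{1·}),…,g_n(z_{n·})) = g_0(f_1(z_{·1}),…,f_m(z_{·m})), both sides being equal to h(K_1·∏_{(i,j)∈Z_1}(z_{ij}+κ_{ij}) − L_1, …, K_k·∏_{(i,j)∈Z_k}(z_{ij}+κ_{ij})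 − L_k). -/

import Mathlib

open Finset

/-- The multiple-blocks parametric solution of the generalized
polymorphism equation: both compositions equal
`h(K₁·∏_{(i,j)∈Z₁}(z_{ij}+κ_{ij}) − L₁, …, K_k·∏_{(i,j)∈Z_k}(z_{ij}+κ_{ij}) − L_k)`. -/
theorem stmt_11 (n m k : ℕ)
    (I : Fin k → Finset (Fin n)) (J : Fin k → Finset (Fin m))
    (hIdisj : ∀ ℓ ℓ' : Fin k, ℓ ≠ ℓ' → Disjoint (I ℓ) (I ℓ'))
    (hIcov : ∀ i : Fin n, ∃ ℓ, i ∈ I ℓ)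
    (hJdisj : ∀ ℓ ℓ' : Fin k, ℓ ≠ ℓ' → Disjoint (J ℓ) (J ℓ'))
    (hJcov : ∀ j : Fin m, ∃ ℓ, j ∈ J ℓ)
    (Z : Fin k → Finset (Fin n × Fin m))
    (hZ : ∀ ℓ, Z ℓ ⊆ I ℓ ×ˢ J ℓ)
    (κ : Fin n → Fin m → ℝ)
    (A B : Fin m → ℝ) (C D : Fin n → ℝ) (K L : Fin k → ℝ)
    (hA : ∀ j, A j ≠ 0) (hC : ∀ i, C i ≠ 0)
    (h : (Fin k → ℝ) → ℝ)
    (g : Fin n → (Fin m → ℝ) → ℝ) (f : Fin m → (Fin n → ℝ) → ℝ)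
    (f0 : (Fin n → ℝ) → ℝ) (g0 : (Fin m → ℝ) → ℝ)
    (hg : ∀ ℓ : Fin k, ∀ i ∈ I ℓ, ∀ y : Fin m → ℝ,
      g i y = C i * ∏ j ∈ univ.filter (fun j => (i, j) ∈ Z ℓ), (y j + κ i j) - D i)
    (hf : ∀ ℓ : Fin k, ∀ j ∈ J ℓ, ∀ x : Fin n → ℝ,
      f j x = A j * ∏ i ∈ univ.filter (fun i => (i, j) ∈ Z ℓ), (x i + κ i j) - B j)
    (hf0 : ∀ x : Fin n → ℝ,
      f0 x = h (fun ℓ => K ℓ * ∏ i ∈ I ℓ, ((x i + D i) / C i) - L ℓ))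
    (hg0 : ∀ y : Fin m → ℝ,
      g0 y = h (fun ℓ => K ℓ * ∏ j ∈ J ℓ, ((y j + B j) / A j) - L ℓ)) :
    ∀ z : Fin n → Fin m → ℝ,
      f0 (fun i => g i (z i)) = g0 (fun j => f j (fun i => z i j)) ∧
      f0 (fun i => g i (z i)) =
        h (fun ℓ => K ℓ * ∏ p ∈ Z ℓ, (z p.1 p.2 + κ p.1 p.2) - L ℓ) := by
  intro z
  have key1 : f0 (fun i => g i (z i)) =
      h (fun ℓ => K ℓ * ∏ p ∈ Z ℓ, (z p.1 p.2 + κ p.1 p.2) - L ℓ) := by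
    rw [hf0]
    congr 1
    funext ℓ
    congr 2
    rw [Finset.prod_finset_product' (f := fun (i : Fin n) (j : Fin m) => z i j + κ i j) (Z ℓ) (I ℓ)
      (fun i => univ.filter (fun j => (i, j) ∈ Z ℓ))
      (fun p => by
        constructor
        · intro hp
          exact ⟨(Finset.mem_product.1 (hZ ℓ hp)).1, by simp [hp]⟩
        · rintro ⟨_, hp⟩; simpa using hp)]
    refine Finset.prod_congr rfl fun i hi => ?_
    rw [hg ℓ i hi, sub_add_cancel]
    exact mul_div_cancel_left₀ _ (hC i)
  have key2 : g0 (fun j => f j (fun i => z i j)) =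
      h (fun ℓ => K ℓ * ∏ p ∈ Z ℓ, (z p.1 p.2 + κ p.1 p.2) - L ℓ) := by
    rw [hg0]
    congr 1
    funext ℓ
    congr 2
    rw [Finset.prod_finset_product_right' (f := fun (i : Fin n) (j : Fin m) => z i j + κ i j) (Z ℓ) (J ℓ)
      (fun j => univ.filter (fun i => (i, j) ∈ Z ℓ))
      (fun p => by
        constructor
        · intro hp
          exact ⟨(Finset.mem_product.1 (hZ ℓ hp)).2, by simp [hp]⟩
        · rintro ⟨_, hp⟩; simpa using hp)]
    refine Finset.prod_congr rfl fun j hj => ?_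
    rw [hf ℓ j hj, sub_add_cancel]
    exact mul_div_cancel_left₀ _ (hA j)
  exact ⟨key1.trans key2.symm, key1⟩
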